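/- Let m, n ≥ 2 be integers. The characteristic polynomial of the Seidel matrix S(m,n) of the complete 3-uniform bipartite hypergraph C^3_{m,n} equals (X - (2n-1))^(m-1) · (X - (2m-1))^(n-1) · (X^2 - (3m+3n-4mn-2)·X + R), where R = (m-1)(n-1)(1-2n)(1-2m) - m·n·(1-2(m+n-2))^2. Consequently the Seidel spectrum of C^3_{m,n} consists of 2n-1 with multiplicity m-1, 2m-1 with multiplicity n-1, and the two numbers (3m+3n-4mn-2 ± √(16m^3 n + n^2 + 2mn(8n^2-40n+49) + m^2(32n^2-80n+1)))/2. -/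

import Mathlib

open Polynomial Matrix

/-- The Seidel matrix of the complete 3-uniform bipartite hypergraph `C³_{m,n}`. -/
noncomputable def seidelS (m n : ℕ) : Matrix (Fin m ⊕ Fin n) (Fin m ⊕ Fin n) ℝ :=
  fun i j =>
    if i = j then 0
    else
      match i, j with
      | Sum.inl _, Sum.inl _ => 1 - 2 * (n : ℝ)
      | Sum.inr _, Sum.inr _ => 1 - 2 * (m : ℝ)
      | _, _ => 1 - 2 * ((m : ℝ) + (n : ℝ) - 2)

/-- Type-I hyperedge-deleted Seidel matrix. -/
noncomputable def seidelI (m n : ℕ) : Matrix (Fin m ⊕ Fin n) (Fin m ⊕ Fin n) ℝ :=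
  fun i j =>
    match i, j with
    | Sum.inl a, Sum.inr b =>
        if a.val = 0 ∧ b.val ≤ 1 then 1 - 2 * ((m : ℝ) + (n : ℝ) - 3)
        else seidelS m n (Sum.inl a) (Sum.inr b)
    | Sum.inr b, Sum.inl a =>
        if a.val = 0 ∧ b.val ≤ 1 then 1 - 2 * ((m : ℝ) + (n : ℝ) - 3)
        else seidelS m n (Sum.inr b) (Sum.inl a)
    | Sum.inr a, Sum.inr b =>
        if (a.val = 0 ∧ b.val = 1) ∨ (a.val = 1 ∧ b.val = 0) then 1 - 2 * ((m : ℝ) - 1)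
        else seidelS m n (Sum.inr a) (Sum.inr b)
    | Sum.inl a, Sum.inl b => seidelS m n (Sum.inl a) (Sum.inl b)

/-- Type-II hyperedge-deleted Seidel matrix. -/
noncomputable def seidelII (m n : ℕ) : Matrix (Fin m ⊕ Fin n) (Fin m ⊕ Fin n) ℝ :=
  fun i j =>
    match i, j with
    | Sum.inl a, Sum.inl b =>
        if (a.val = 0 ∧ b.val = 1) ∨ (a.val = 1 ∧ b.val = 0) then 1 - 2 * ((n : ℝ) - 1)
        else seidelS m n (Sum.inl a) (Sum.inl b)
    | Sum.inl a, Sum.inr b =>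
        if a.val ≤ 1 ∧ b.val = 0 then 1 - 2 * ((m : ℝ) + (n : ℝ) - 3)
        else seidelS m n (Sum.inl a) (Sum.inr b)
    | Sum.inr b, Sum.inl a =>
        if a.val ≤ 1 ∧ b.val = 0 then 1 - 2 * ((m : ℝ) + (n : ℝ) - 3)
        else seidelS m n (Sum.inr b) (Sum.inl a)
    | Sum.inr a, Sum.inr b => seidelS m n (Sum.inr a) (Sum.inr b)

/-- Seidel energy: sum of absolute values of the eigenvalues (roots of the
characteristic polynomial, with multiplicity). -/
noncomputable def seidelEnergy {k : Type*} [Fintype k] [DecidableEq k]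
    (M : Matrix k k ℝ) : ℝ :=
  (M.charpoly.roots.map (fun x => |x|)).sum

noncomputable def Jmat (p q : Type*) : Matrix p q ℝ := Matrix.of fun _ _ => 1

lemma Jmat_mul_Jmat (p q r : Type*) [Fintype q] :
    Jmat p q * Jmat q r = (Fintype.card q : ℝ) • Jmat p r := by
  ext i j
  simp [Jmat, Matrix.mul_apply]

lemma smul_one_add_smul_J_mul {k : Type*} [Fintype k] [DecidableEq k] (a b c d : ℝ) :
    (a • (1 : Matrix k k ℝ) + b • Jmat k k) * (c • (1 : Matrix k k ℝ) + d • Jmat k k)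
      = (a*c) • (1 : Matrix k k ℝ)
        + (a*d + b*c + b*d*(Fintype.card k : ℝ)) • Jmat k k := by
  rw [Matrix.add_mul, Matrix.mul_add, Matrix.mul_add, smul_mul_smul_comm, smul_mul_smul_comm,
    smul_mul_smul_comm, smul_mul_smul_comm, Matrix.one_mul, Matrix.mul_one, Matrix.one_mul,
    Jmat_mul_Jmat, smul_smul]
  module

lemma det_smul_one_add_smul_J {k : Type*} [Fintype k] [DecidableEq k] [Nonempty k]
    (a b : ℝ) (ha : a ≠ 0) :
    (a • (1 : Matrix k k ℝ) + b • Jmat k k).det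
      = a ^ (Fintype.card k - 1) * (a + b * Fintype.card k) := by
  have hJ : Jmat k k = Matrix.replicateCol Unit (fun _ => (1:ℝ)) * Matrix.replicateRow Unit (fun _ => (1:ℝ)) := by
    ext i j
    simp [Jmat, Matrix.mul_apply]
  have : a • (1 : Matrix k k ℝ) + b • Jmat k k
      = a • ((1 : Matrix k k ℝ) + Matrix.replicateCol Unit (fun _ => b/a) * Matrix.replicateRow Unit (fun _ => (1:ℝ))) := by
    rw [smul_add, hJ]
    ext i j
    simp [Matrix.mul_apply]
    field_simp
  rw [this, Matrix.det_smul, Matrix.det_one_add_replicateCol_mul_replicateRow]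
  have hc : 1 ≤ Fintype.card k := Fintype.card_pos
  simp only [dotProduct, Finset.sum_const, nsmul_eq_mul, Finset.card_univ, mul_one]
  rw [show Fintype.card k = (Fintype.card k - 1) + 1 from (Nat.succ_pred_eq_of_pos hc).symm,
    pow_succ]
  push_cast
  field_simp

lemma blocks_eq (m n : ℕ) (x : ℝ) :
    x • (1 : Matrix (Fin m ⊕ Fin n) (Fin m ⊕ Fin n) ℝ) - seidelS m n
      = Matrix.fromBlocks
          ((x - (2*n-1)) • 1 + (2*(n:ℝ)-1) • Jmat (Fin m) (Fin m))
          ((2*(m:ℝ)+2*n-5) • Jmat (Fin m) (Fin n))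
          ((2*(m:ℝ)+2*n-5) • Jmat (Fin n) (Fin m))
          ((x - (2*m-1)) • 1 + (2*(m:ℝ)-1) • Jmat (Fin n) (Fin n)) := by
  ext i j
  rcases i with a | a <;> rcases j with b | b
  · rcases eq_or_ne a b with h | h <;>
      simp [seidelS, Jmat, Matrix.one_apply, h, Matrix.fromBlocks] <;> ring
  · simp [seidelS, Jmat, Matrix.one_apply, Matrix.fromBlocks]
    ring
  · simp [seidelS, Jmat, Matrix.one_apply, Matrix.fromBlocks]
    ring
  · rcases eq_or_ne a b with h | h <;>
      simp [seidelS, Jmat, Matrix.one_apply, h, Matrix.fromBlocks] <;> ring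

lemma det_eval (m n : ℕ) (hm : 2 ≤ m) (hn : 2 ≤ n) (x : ℝ)
    (h1 : x - (2*(n:ℝ)-1) ≠ 0) (h2 : x - (2*(m:ℝ)-1) ≠ 0)
    (h3 : x - (2*(n:ℝ)-1) + (2*(n:ℝ)-1) * m ≠ 0) :
    (x • (1 : Matrix (Fin m ⊕ Fin n) (Fin m ⊕ Fin n) ℝ) - seidelS m n).det
      = (x - (2*(n:ℝ)-1)) ^ (m-1) * (x - (2*(m:ℝ)-1)) ^ (n-1) *
        (x ^ 2 - (3*(m:ℝ) + 3*n - 4*m*n - 2) * x +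
          (((m:ℝ)-1) * ((n:ℝ)-1) * (1 - 2*(n:ℝ)) * (1 - 2*(m:ℝ)) -
            (m:ℝ) * n * (1 - 2*((m:ℝ) + n - 2))^2)) := by
  have hm0 : (0:ℕ) < m := by omega
  have hn0 : (0:ℕ) < n := by omega
  haveI : Nonempty (Fin m) := ⟨⟨0, hm0⟩⟩
  haveI : Nonempty (Fin n) := ⟨⟨0, hn0⟩⟩
  set A : Matrix (Fin m) (Fin m) ℝ :=
    (x - (2*(n:ℝ)-1)) • 1 + (2*(n:ℝ)-1) • Jmat (Fin m) (Fin m) with hA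
  set A' : Matrix (Fin m) (Fin m) ℝ :=
    (x - (2*(n:ℝ)-1))⁻¹ • 1 +
      (-((2*(n:ℝ)-1) / ((x - (2*(n:ℝ)-1)) * (x - (2*(n:ℝ)-1) + (2*(n:ℝ)-1)*m)))) •
        Jmat (Fin m) (Fin m) with hA'
  have hAA' : A * A' = 1 := by
    rw [hA, hA', smul_one_add_smul_J_mul, Fintype.card_fin]
    have e1 : (x - (2*(n:ℝ)-1)) * (x - (2*(n:ℝ)-1))⁻¹ = 1 := mul_inv_cancel₀ h1
    have e2 : (x - (2*(n:ℝ)-1)) *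
          -((2*(n:ℝ)-1) / ((x - (2*(n:ℝ)-1)) * (x - (2*(n:ℝ)-1) + (2*(n:ℝ)-1)*m)))
        + (2*(n:ℝ)-1) * (x - (2*(n:ℝ)-1))⁻¹
        + (2*(n:ℝ)-1) *
            -((2*(n:ℝ)-1) / ((x - (2*(n:ℝ)-1)) * (x - (2*(n:ℝ)-1) + (2*(n:ℝ)-1)*m))) * m
        = 0 := by
      field_simp
      ring
    rw [e1, e2, zero_smul, add_zero, one_smul]
  haveI : Invertible A := invertibleOfRightInverse A A' hAA'
  have hInvA : ⅟A = A' := invOf_eq_right_inv hAA'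
  rw [blocks_eq, Matrix.det_fromBlocks₁₁, hInvA]
  have h5 : Jmat (Fin n) (Fin m) * A' =
      (x - (2*(n:ℝ)-1) + (2*(n:ℝ)-1)*m)⁻¹ • Jmat (Fin n) (Fin m) := by
    rw [hA', Matrix.mul_add, Matrix.mul_smul, Matrix.mul_one, Matrix.mul_smul, Jmat_mul_Jmat,
      Fintype.card_fin, smul_smul, ← add_smul]
    have e3 : (x - (2*(n:ℝ)-1))⁻¹ +
          -((2*(n:ℝ)-1) / ((x - (2*(n:ℝ)-1)) * (x - (2*(n:ℝ)-1) + (2*(n:ℝ)-1)*m))) * m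
        = (x - (2*(n:ℝ)-1) + (2*(n:ℝ)-1)*m)⁻¹ := by
      field_simp
      ring_nf
    rw [e3]
  have hCAB : ((2*(m:ℝ)+2*n-5) • Jmat (Fin n) (Fin m)) * A' *
        ((2*(m:ℝ)+2*n-5) • Jmat (Fin m) (Fin n))
      = ((2*(m:ℝ)+2*n-5)^2 * m * (x - (2*(n:ℝ)-1) + (2*(n:ℝ)-1)*m)⁻¹) •
          Jmat (Fin n) (Fin n) := by
    rw [Matrix.smul_mul, h5, Matrix.smul_mul, Matrix.mul_smul, smul_smul, Matrix.smul_mul,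
      Jmat_mul_Jmat, Fintype.card_fin, smul_smul, smul_smul]
    congr 1
    ring
  rw [hCAB]
  have hD : ((x - (2*(m:ℝ)-1)) • 1 + (2*(m:ℝ)-1) • Jmat (Fin n) (Fin n))
        - ((2*(m:ℝ)+2*n-5)^2 * m * (x - (2*(n:ℝ)-1) + (2*(n:ℝ)-1)*m)⁻¹) • Jmat (Fin n) (Fin n)
      = (x - (2*(m:ℝ)-1)) • 1 +
          ((2*(m:ℝ)-1) - (2*(m:ℝ)+2*n-5)^2 * m * (x - (2*(n:ℝ)-1) + (2*(n:ℝ)-1)*m)⁻¹) •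
            Jmat (Fin n) (Fin n) := by
    rw [sub_smul]
    module
  rw [hD, det_smul_one_add_smul_J _ _ h1, det_smul_one_add_smul_J _ _ h2,
    Fintype.card_fin, Fintype.card_fin]
  have key : (x - (2*(n:ℝ)-1) + (2*(n:ℝ)-1) * m) *
        ((x - (2*(m:ℝ)-1)) +
          ((2*(m:ℝ)-1) - (2*(m:ℝ)+2*n-5)^2 * m * (x - (2*(n:ℝ)-1) + (2*(n:ℝ)-1)*m)⁻¹) * n)
      = (x ^ 2 - (3*(m:ℝ) + 3*n - 4*m*n - 2) * x +
          (((m:ℝ)-1) * ((n:ℝ)-1) * (1 - 2*(n:ℝ)) * (1 - 2*(m:ℝ)) -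
            (m:ℝ) * n * (1 - 2*((m:ℝ) + n - 2))^2)) := by
    field_simp
    ring
  calc (x - (2*(n:ℝ)-1)) ^ (m-1) * (x - (2*(n:ℝ)-1) + (2*(n:ℝ)-1) * ↑m) *
        ((x - (2*(m:ℝ)-1)) ^ (n-1) *
          ((x - (2*(m:ℝ)-1)) +
            ((2*(m:ℝ)-1) - (2*(m:ℝ)+2*n-5)^2 * m * (x - (2*(n:ℝ)-1) + (2*(n:ℝ)-1)*m)⁻¹) * ↑n))
      = (x - (2*(n:ℝ)-1)) ^ (m-1) * (x - (2*(m:ℝ)-1)) ^ (n-1) *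
        ((x - (2*(n:ℝ)-1) + (2*(n:ℝ)-1) * ↑m) *
          ((x - (2*(m:ℝ)-1)) +
            ((2*(m:ℝ)-1) - (2*(m:ℝ)+2*n-5)^2 * m * (x - (2*(n:ℝ)-1) + (2*(n:ℝ)-1)*m)⁻¹) * ↑n)) := by
        ring
    _ = _ := by rw [key]

lemma eval_charpoly' {k : Type*} [Fintype k] [DecidableEq k] (M : Matrix k k ℝ) (x : ℝ) :
    M.charpoly.eval x = (x • (1 : Matrix k k ℝ) - M).det := by
  rw [Matrix.charpoly, ← Polynomial.coe_evalRingHom, RingHom.map_det]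
  congr 1
  ext i j
  rcases eq_or_ne i j with h | h
  · subst h
    simp [Matrix.charmatrix_apply_eq, Matrix.one_apply]
  · simp [Matrix.charmatrix_apply_ne _ _ _ h, Matrix.one_apply, h]

theorem stmt0 (m n : ℕ) (hm : 2 ≤ m) (hn : 2 ≤ n) :
    (seidelS m n).charpoly =
      (X - C (2*(n:ℝ) - 1)) ^ (m - 1) * (X - C (2*(m:ℝ) - 1)) ^ (n - 1) *
        (X ^ 2 - C (3*(m:ℝ) + 3*n - 4*m*n - 2) * X +
          C (((m:ℝ)-1) * ((n:ℝ)-1) * (1 - 2*(n:ℝ)) * (1 - 2*(m:ℝ)) -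
              (m:ℝ) * n * (1 - 2*((m:ℝ) + n - 2))^2)) ∧
    (seidelS m n).charpoly.roots =
      Multiset.replicate (m - 1) (2*(n:ℝ) - 1) +
      Multiset.replicate (n - 1) (2*(m:ℝ) - 1) +
      {(3*(m:ℝ) + 3*n - 4*m*n - 2 +
          Real.sqrt (16*(m:ℝ)^3*n + (n:ℝ)^2 + 2*(m:ℝ)*n*(8*(n:ℝ)^2 - 40*n + 49) +
            (m:ℝ)^2*(32*(n:ℝ)^2 - 80*n + 1))) / 2,
       (3*(m:ℝ) + 3*n - 4*m*n - 2 -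
          Real.sqrt (16*(m:ℝ)^3*n + (n:ℝ)^2 + 2*(m:ℝ)*n*(8*(n:ℝ)^2 - 40*n + 49) +
            (m:ℝ)^2*(32*(n:ℝ)^2 - 80*n + 1))) / 2} := by
  have hpoly : (seidelS m n).charpoly =
      (X - C (2*(n:ℝ) - 1)) ^ (m - 1) * (X - C (2*(m:ℝ) - 1)) ^ (n - 1) *
        (X ^ 2 - C (3*(m:ℝ) + 3*n - 4*m*n - 2) * X + C (((m:ℝ)-1) * ((n:ℝ)-1) * (1 - 2*(n:ℝ)) * (1 - 2*(m:ℝ)) -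
              (m:ℝ) * n * (1 - 2*((m:ℝ) + n - 2))^2)) := by
    apply Polynomial.eq_of_infinite_eval_eq
    have hsub : ({2*(n:ℝ)-1, 2*(m:ℝ)-1, (2*(n:ℝ)-1) - (2*(n:ℝ)-1)*m} : Set ℝ)ᶜ ⊆
        {x | Polynomial.eval x (seidelS m n).charpoly =
          Polynomial.eval x ((X - C (2*(n:ℝ) - 1)) ^ (m - 1) * (X - C (2*(m:ℝ) - 1)) ^ (n - 1) *
            (X ^ 2 - C (3*(m:ℝ) + 3*n - 4*m*n - 2) * X + C (((m:ℝ)-1) * ((n:ℝ)-1) * (1 - 2*(n:ℝ)) * (1 - 2*(m:ℝ)) -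
              (m:ℝ) * n * (1 - 2*((m:ℝ) + n - 2))^2)))} := by
      intro x hx
      simp only [Set.mem_compl_iff, Set.mem_insert_iff, Set.mem_singleton_iff, not_or] at hx
      obtain ⟨hx1, hx2, hx3⟩ := hx
      have h1 : x - (2*(n:ℝ)-1) ≠ 0 := sub_ne_zero.mpr hx1
      have h2 : x - (2*(m:ℝ)-1) ≠ 0 := sub_ne_zero.mpr hx2
      have h3 : x - (2*(n:ℝ)-1) + (2*(n:ℝ)-1)*m ≠ 0 := by
        intro h
        apply hx3
        linarith
      simp only [Set.mem_setOf_eq]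
      rw [eval_charpoly', det_eval m n hm hn x h1 h2 h3]
      simp [eval_mul, eval_pow, eval_sub, eval_add, eval_X, eval_C]
    have hfin : ({2*(n:ℝ)-1, 2*(m:ℝ)-1, (2*(n:ℝ)-1) - (2*(n:ℝ)-1)*m} : Set ℝ).Finite :=
      ((Set.finite_singleton _).insert _).insert _
    exact Set.Infinite.mono hsub hfin.infinite_compl
  refine ⟨hpoly, ?_⟩
  have hΔ : (0:ℝ) ≤ 16*(m:ℝ)^3*n + (n:ℝ)^2 + 2*(m:ℝ)*n*(8*(n:ℝ)^2 - 40*n + 49) +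
            (m:ℝ)^2*(32*(n:ℝ)^2 - 80*n + 1) := by
    have h : (16*(m:ℝ)^3*n + (n:ℝ)^2 + 2*(m:ℝ)*n*(8*(n:ℝ)^2 - 40*n + 49) +
            (m:ℝ)^2*(32*(n:ℝ)^2 - 80*n + 1)) =
        ((1-2*(n:ℝ))*((m:ℝ)-1) - (1-2*(m:ℝ))*((n:ℝ)-1))^2
          + 4*(m:ℝ)*n*(1-2*((m:ℝ)+n-2))^2 := by
      ring
    rw [h]
    positivity
  have hd : Real.sqrt (16*(m:ℝ)^3*n + (n:ℝ)^2 + 2*(m:ℝ)*n*(8*(n:ℝ)^2 - 40*n + 49) +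
            (m:ℝ)^2*(32*(n:ℝ)^2 - 80*n + 1)) * Real.sqrt (16*(m:ℝ)^3*n + (n:ℝ)^2 + 2*(m:ℝ)*n*(8*(n:ℝ)^2 - 40*n + 49) +
            (m:ℝ)^2*(32*(n:ℝ)^2 - 80*n + 1)) = 16*(m:ℝ)^3*n + (n:ℝ)^2 + 2*(m:ℝ)*n*(8*(n:ℝ)^2 - 40*n + 49) +
            (m:ℝ)^2*(32*(n:ℝ)^2 - 80*n + 1) :=
    Real.mul_self_sqrt hΔ
  have hquad : (X:ℝ[X]) ^ 2 - C (3*(m:ℝ) + 3*n - 4*m*n - 2) * X + C (((m:ℝ)-1) * ((n:ℝ)-1) * (1 - 2*(n:ℝ)) * (1 - 2*(m:ℝ)) -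
              (m:ℝ) * n * (1 - 2*((m:ℝ) + n - 2))^2) =
      (X - C ((3*(m:ℝ) + 3*n - 4*m*n - 2 + Real.sqrt (16*(m:ℝ)^3*n + (n:ℝ)^2 + 2*(m:ℝ)*n*(8*(n:ℝ)^2 - 40*n + 49) +
            (m:ℝ)^2*(32*(n:ℝ)^2 - 80*n + 1))) / 2)) *
      (X - C ((3*(m:ℝ) + 3*n - 4*m*n - 2 - Real.sqrt (16*(m:ℝ)^3*n + (n:ℝ)^2 + 2*(m:ℝ)*n*(8*(n:ℝ)^2 - 40*n + 49) +
            (m:ℝ)^2*(32*(n:ℝ)^2 - 80*n + 1))) / 2)) := by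
    have hsum : ((3*(m:ℝ) + 3*n - 4*m*n - 2 + Real.sqrt (16*(m:ℝ)^3*n + (n:ℝ)^2 + 2*(m:ℝ)*n*(8*(n:ℝ)^2 - 40*n + 49) +
            (m:ℝ)^2*(32*(n:ℝ)^2 - 80*n + 1))) / 2) + ((3*(m:ℝ) + 3*n - 4*m*n - 2 - Real.sqrt (16*(m:ℝ)^3*n + (n:ℝ)^2 + 2*(m:ℝ)*n*(8*(n:ℝ)^2 - 40*n + 49) +
            (m:ℝ)^2*(32*(n:ℝ)^2 - 80*n + 1))) / 2)
        = 3*(m:ℝ) + 3*n - 4*m*n - 2 := by ring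
    have hprod : ((3*(m:ℝ) + 3*n - 4*m*n - 2 + Real.sqrt (16*(m:ℝ)^3*n + (n:ℝ)^2 + 2*(m:ℝ)*n*(8*(n:ℝ)^2 - 40*n + 49) +
            (m:ℝ)^2*(32*(n:ℝ)^2 - 80*n + 1))) / 2) * ((3*(m:ℝ) + 3*n - 4*m*n - 2 - Real.sqrt (16*(m:ℝ)^3*n + (n:ℝ)^2 + 2*(m:ℝ)*n*(8*(n:ℝ)^2 - 40*n + 49) +
            (m:ℝ)^2*(32*(n:ℝ)^2 - 80*n + 1))) / 2)
        = ((m:ℝ)-1) * ((n:ℝ)-1) * (1 - 2*(n:ℝ)) * (1 - 2*(m:ℝ)) -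
              (m:ℝ) * n * (1 - 2*((m:ℝ) + n - 2))^2 := by
      linear_combination (-(1:ℝ)/4) * hd
    rw [← hsum, ← hprod, C_add, C_mul]
    ring
  rw [hpoly, hquad]
  have m1 : ((X - C (2*(n:ℝ) - 1)) ^ (m - 1)).Monic := (monic_X_sub_C _).pow _
  have m2 : ((X - C (2*(m:ℝ) - 1)) ^ (n - 1)).Monic := (monic_X_sub_C _).pow _
  have m3 : ((X - C ((3*(m:ℝ) + 3*n - 4*m*n - 2 + Real.sqrt (16*(m:ℝ)^3*n + (n:ℝ)^2 + 2*(m:ℝ)*n*(8*(n:ℝ)^2 - 40*n + 49) +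
            (m:ℝ)^2*(32*(n:ℝ)^2 - 80*n + 1))) / 2)) *
      (X - C ((3*(m:ℝ) + 3*n - 4*m*n - 2 - Real.sqrt (16*(m:ℝ)^3*n + (n:ℝ)^2 + 2*(m:ℝ)*n*(8*(n:ℝ)^2 - 40*n + 49) +
            (m:ℝ)^2*(32*(n:ℝ)^2 - 80*n + 1))) / 2))).Monic :=
    (monic_X_sub_C _).mul (monic_X_sub_C _)
  rw [Polynomial.roots_mul (((m1.mul m2).mul m3).ne_zero),
    Polynomial.roots_mul ((m1.mul m2).ne_zero),
    Polynomial.roots_mul (m3.ne_zero),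
    Polynomial.roots_pow, Polynomial.roots_pow, Polynomial.roots_X_sub_C,
    Polynomial.roots_X_sub_C, Polynomial.roots_X_sub_C, Polynomial.roots_X_sub_C,
    Multiset.nsmul_singleton, Multiset.nsmul_singleton]
  rfl
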